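/- arXiv:2507.23231 — 7 statements merged into one kernel-verified Lean document; each statement's English description precedes it below -/
import Mathlib

section
/- Let G be a finite simple graph that is connected, bipartite, and has at least one edge. Then the symmetric lift HL'₂(G) has exactly two connected components. -/
open SimpleGraph

/-- The symmetric lift `HL'₂(G)`: vertices are ordered pairs `(u,v)` with `{u,v}` an edge of `G`;
distinct vertices `(u,v)` and `(x,y)` are adjacent iff `u = x` or `v = y`. -/
def symLift {V : Type*} (G : SimpleGraph V) : SimpleGraph {p : V × V // G.Adj p.1 p.2} where
  Adj a b := a ≠ b ∧ (a.val.1 = b.val.1 ∨ a.val.2 = b.val.2)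
  symm := ⟨fun _ _ h => ⟨h.1.symm, h.2.imp Eq.symm Eq.symm⟩⟩
  loopless := ⟨fun _ h => h.1 rfl⟩

section Aux

variable {V : Type*} {G : SimpleGraph V}

lemma symLift_reach_fst {u v w : V} (h : G.Adj u v) (h' : G.Adj u w) :
    (symLift G).Reachable ⟨(u, v), h⟩ ⟨(u, w), h'⟩ := by
  by_cases e : v = w
  · subst e; exact Reachable.refl _
  · exact Adj.reachable ⟨fun hh => e (congrArg (fun a => a.val.2) hh), Or.inl rfl⟩

lemma symLift_reach_snd {u v w : V} (h : G.Adj v u) (h' : G.Adj w u) :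
    (symLift G).Reachable ⟨(v, u), h⟩ ⟨(w, u), h'⟩ := by
  by_cases e : v = w
  · subst e; exact Reachable.refl _
  · exact Adj.reachable ⟨fun hh => e (congrArg (fun a => a.val.1) hh), Or.inr rfl⟩

lemma fin2_eq : ∀ x y z : Fin 2, x ≠ z → y ≠ z → x = y := by decide

lemma fin2_cases : ∀ i x y : Fin 2, x ≠ y → i = x ∨ i = y := by decide

lemma symLift_color_adj (c : G.Coloring (Fin 2)) {a b : {p : V × V // G.Adj p.1 p.2}}
    (h : (symLift G).Adj a b) : c a.val.1 = c b.val.1 := by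
  rcases h.2 with h1 | h2
  · rw [h1]
  · have ha := c.valid a.2
    have hb := c.valid b.2
    rw [h2] at ha
    exact fin2_eq _ _ _ ha hb

lemma symLift_color_reach (c : G.Coloring (Fin 2)) {a b : {p : V × V // G.Adj p.1 p.2}}
    (h : (symLift G).Reachable a b) : c a.val.1 = c b.val.1 := by
  obtain ⟨p⟩ := h
  induction p with
  | nil => rfl
  | cons h p ih => exact (symLift_color_adj c h).trans ih

lemma symLift_key {u x : V} (p : G.Walk u x) :
    (∀ (v : V) (h : G.Adj u v),
      (∃ (w : V) (h' : G.Adj x w), (symLift G).Reachable ⟨(u, v), h⟩ ⟨(x, w), h'⟩) ∨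
      (∃ (w : V) (h' : G.Adj w x), (symLift G).Reachable ⟨(u, v), h⟩ ⟨(w, x), h'⟩)) ∧
    (∀ (v : V) (h : G.Adj v u),
      (∃ (w : V) (h' : G.Adj x w), (symLift G).Reachable ⟨(v, u), h⟩ ⟨(x, w), h'⟩) ∨
      (∃ (w : V) (h' : G.Adj w x), (symLift G).Reachable ⟨(v, u), h⟩ ⟨(w, x), h'⟩)) := by
  induction p with
  | nil =>
    exact ⟨fun v h => Or.inl ⟨v, h, Reachable.refl _⟩,
      fun v h => Or.inr ⟨v, h, Reachable.refl _⟩⟩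
  | @cons u u' x h1 p' ih =>
    constructor
    · intro v h
      have r1 : (symLift G).Reachable ⟨(u, v), h⟩ ⟨(u, u'), h1⟩ := symLift_reach_fst h h1
      rcases ih.2 u h1 with ⟨w, h', r2⟩ | ⟨w, h', r2⟩
      · exact Or.inl ⟨w, h', r1.trans r2⟩
      · exact Or.inr ⟨w, h', r1.trans r2⟩
    · intro v h
      have r1 : (symLift G).Reachable ⟨(v, u), h⟩ ⟨(u', u), h1.symm⟩ :=
        symLift_reach_snd h h1.symm
      rcases ih.1 u h1.symm with ⟨w, h', r2⟩ | ⟨w, h', r2⟩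
      · exact Or.inl ⟨w, h', r1.trans r2⟩
      · exact Or.inr ⟨w, h', r1.trans r2⟩

end Aux

theorem stmt_1 {V : Type*} [Fintype V] (G : SimpleGraph V)
    (hconn : G.Connected) (hbip : G.Colorable 2) (hedge : G.edgeSet.Nonempty) :
    Nat.card (symLift G).ConnectedComponent = 2 := by
  obtain ⟨c⟩ := hbip
  obtain ⟨⟨u, v⟩, huv⟩ : ∃ p : V × V, G.Adj p.1 p.2 := by
    obtain ⟨e, he⟩ := hedge
    induction e using Sym2.ind with
    | _ a b => exact ⟨(a, b), he⟩
  let φ : (symLift G).ConnectedComponent → Fin 2 :=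
    ConnectedComponent.lift (fun a => c a.val.1) (fun a b p _ => symLift_color_reach c ⟨p⟩)
  have hbij : Function.Bijective φ := by
    constructor
    · intro C D
      refine ConnectedComponent.ind₂ (fun a b hab => ?_) C D
      have hab' : c a.val.1 = c b.val.1 := hab
      rw [ConnectedComponent.eq]
      obtain ⟨pw⟩ := hconn.preconnected a.val.1 b.val.1
      rcases (symLift_key pw).1 a.val.2 a.2 with ⟨w, h', r⟩ | ⟨w, h', r⟩
      · exact r.trans (symLift_reach_fst h' b.2)
      · exfalso
        have hcw : c a.val.1 = c w := symLift_color_reach c r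
        exact c.valid h' (by rw [← hcw, hab'])
    · intro i
      rcases fin2_cases i (c u) (c v) (c.valid huv) with rfl | rfl
      · exact ⟨(symLift G).connectedComponentMk ⟨(u, v), huv⟩, rfl⟩
      · exact ⟨(symLift G).connectedComponentMk ⟨(v, u), huv.symm⟩, rfl⟩
  rw [Nat.card_eq_of_bijective φ hbij]
  simp
end

section
/- For every finite simple graph G (with a linear order on its vertex set, for the ordered lift), both the ordered lift HL₂(G) and the symmetric lift HL'₂(G) are claw-free and odd-hole-free: neither graph contains an induced subgraph isomorphic to the complete bipartite graph K_{1,3}, and neither graph contains an induced cycle of odd length at least 5. -/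
open SimpleGraph

/-- The ordered lift `HL₂(G)` with respect to a linear order `r` on the vertices:
vertices are ordered pairs `(u,v)` with `u < v` and `{u,v}` an edge of `G`;
distinct vertices `(u,v)` and `(x,y)` are adjacent iff `u = x` or `v = y`. -/
def orderedLift {V : Type*} (G : SimpleGraph V) (r : LinearOrder V) :
    SimpleGraph {p : V × V // r.lt p.1 p.2 ∧ G.Adj p.1 p.2} where
  Adj a b := a ≠ b ∧ (a.val.1 = b.val.1 ∨ a.val.2 = b.val.2)
  symm := ⟨fun _ _ h => ⟨h.1.symm, h.2.imp Eq.symm Eq.symm⟩⟩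
  loopless := ⟨fun _ h => h.1 rfl⟩

section Aux

variable {W X Y : Type*} {H : SimpleGraph W} {g : W → X} {h : W → Y}

/-- Claw-freeness for graphs whose adjacency is "distinct and equal in one coordinate". -/
lemma aux_claw (hadj : ∀ a b : W, H.Adj a b ↔ a ≠ b ∧ (g a = g b ∨ h a = h b)) :
    ¬ ∃ s : Set W, Nonempty ((H.induce s) ≃g completeBipartiteGraph (Fin 1) (Fin 3)) := by
  rintro ⟨s, ⟨f⟩⟩
  set c : s := f.symm (Sum.inl 0) with hc
  set x : Fin 3 → s := fun j => f.symm (Sum.inr j) with hx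
  have hcx : ∀ j : Fin 3, H.Adj (c : W) (x j : W) := by
    intro j
    have hadj' : (completeBipartiteGraph (Fin 1) (Fin 3)).Adj (f c) (f (x j)) := by
      simp [hc, hx]
    rw [f.map_adj_iff] at hadj'
    exact hadj'
  classical
  -- assign to each leaf whether it matches c in the first coordinate
  obtain ⟨j, k, hjk, hb⟩ := Fintype.exists_ne_map_eq_of_card_lt
    (fun j : Fin 3 => decide (g (c : W) = g (x j : W))) (by simp)
  have hxjk : (x j : W) ≠ (x k : W) := by
    intro hw
    exact hjk (Sum.inr_injective (f.symm.injective (Subtype.ext hw)))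
  have hiff : (g (c : W) = g (x j : W)) ↔ (g (c : W) = g (x k : W)) :=
    decide_eq_decide.mp hb
  have hadjjk : H.Adj (x j : W) (x k : W) := by
    rw [hadj]
    refine ⟨hxjk, ?_⟩
    by_cases hg : g (c : W) = g (x j : W)
    · exact Or.inl (hg.symm.trans (hiff.mp hg))
    · have hg' : ¬ g (c : W) = g (x k : W) := fun hk => hg (hiff.mpr hk)
      have hj2 := ((hadj _ _).mp (hcx j)).2.resolve_left hg
      have hk2 := ((hadj _ _).mp (hcx k)).2.resolve_left hg'
      exact Or.inr (hj2.symm.trans hk2)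
  have : (completeBipartiteGraph (Fin 1) (Fin 3)).Adj (f (x j)) (f (x k)) := by
    rw [f.map_adj_iff]
    exact hadjjk
  simp [hx] at this

lemma fin_val_two {m : ℕ} (hm : 3 ≤ m) : ((1 : Fin (m + 2)) + 1).val = 2 := by
  rw [Fin.val_add, Fin.val_one]
  exact Nat.mod_eq_of_lt (by omega)

lemma fin_two_ne_zero {m : ℕ} (hm : 3 ≤ m) : ((1 : Fin (m + 2)) + 1) ≠ 0 := by
  intro h0
  have e2 := fin_val_two hm
  rw [h0] at e2
  simp at e2

open Fin.NatCast Fin.CommRing in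
/-- No induced odd cycle of length ≥ 5 for graphs whose adjacency is
"distinct and equal in one coordinate". -/
lemma aux_hole (hadj : ∀ a b : W, H.Adj a b ↔ a ≠ b ∧ (g a = g b ∨ h a = h b)) :
    ¬ ∃ (n : ℕ) (s : Set W),
        Odd n ∧ 5 ≤ n ∧ Nonempty ((H.induce s) ≃g cycleGraph n) := by
  rintro ⟨n, s, hodd, hn, ⟨f⟩⟩
  obtain ⟨m, rfl⟩ : ∃ m, n = m + 2 := ⟨n - 2, by omega⟩
  have hm : 3 ≤ m := by omega
  set w : Fin (m + 2) → s := fun i => f.symm i with hw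
  -- consecutive vertices are adjacent
  have hconsec : ∀ i : Fin (m + 2), H.Adj (w i : W) (w (i + 1) : W) := by
    intro i
    have hcyc : (cycleGraph (m + 2)).Adj (f (w i)) (f (w (i + 1))) := by
      simp only [hw, RelIso.apply_symm_apply]
      rw [cycleGraph_adj]
      right; ring
    rw [f.map_adj_iff] at hcyc
    exact hcyc
  -- no chords at distance 2
  have hnochord : ∀ i : Fin (m + 2), ¬ H.Adj (w i : W) (w (i + 1 + 1) : W) := by
    intro i hA
    have : (cycleGraph (m + 2)).Adj (f (w i)) (f (w (i + 1 + 1))) := by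
      rw [f.map_adj_iff]; exact hA
    simp only [hw, RelIso.apply_symm_apply, cycleGraph_adj] at this
    have h1 : i - (i + 1 + 1) = -(1 + 1) := by ring
    have h2 : i + 1 + 1 - i = 1 + 1 := by ring
    rw [h1, h2] at this
    rcases this with h3 | h3
    · have h4 : (1 + 1 + 1 : Fin (m + 2)) = 0 := by
        have := congrArg (· + (1 + 1)) h3
        simpa [add_comm, add_assoc, add_left_comm] using this.symm
      have e3 : ((1 : Fin (m + 2)) + 1 + 1).val = 3 := by
        rw [Fin.val_add, fin_val_two hm, Fin.val_one]
        exact Nat.mod_eq_of_lt (by omega)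
      rw [h4] at e3
      simp at e3
    · have h4 : (1 : Fin (m + 2)) = 0 := by
        have := congrArg (· - 1) h3
        simp at this
      simp [Fin.ext_iff] at h4
  -- the "type" of the edge starting at position i
  set T : Fin (m + 2) → Prop := fun i => g (w i : W) = g (w (i + 1) : W) with hT
  have hflip : ∀ i : Fin (m + 2), T (i + 1) ↔ ¬ T i := by
    intro i
    have hne : (w i : W) ≠ (w (i + 1 + 1) : W) := by
      intro hEq
      have : i = i + 1 + 1 := by
        have := f.symm.injective (Subtype.ext hEq)
        simpa [hw] using this
      have h0 : ((1 : Fin (m + 2)) + 1) = 0 := by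
        have := congrArg (· - i) this
        simpa [add_comm, add_assoc, add_left_comm, sub_eq_iff_eq_add] using this.symm
      exact fin_two_ne_zero hm h0
    constructor
    · intro h2 h1
      exact hnochord i ((hadj _ _).mpr ⟨hne, Or.inl (h1.trans h2)⟩)
    · intro h1
      by_contra h2
      have e1 := ((hadj _ _).mp (hconsec i)).2.resolve_left h1
      have e2 := ((hadj _ _).mp (hconsec (i + 1))).2.resolve_left h2
      exact hnochord i ((hadj _ _).mpr ⟨hne, Or.inr (e1.trans e2)⟩)
  classical
  set S : ℕ → Prop := fun k => T ((k : Fin (m + 2))) with hS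
  have hSflip : ∀ k : ℕ, S (k + 1) ↔ ¬ S k := by
    intro k
    have : ((k + 1 : ℕ) : Fin (m + 2)) = (k : Fin (m + 2)) + 1 := by push_cast; ring
    rw [hS]
    simp only [this]
    exact hflip _
  have hkey : ∀ k : ℕ, (S k ↔ S 0) ↔ Even k := by
    intro k
    induction k with
    | zero => simp
    | succ k ih =>
      rw [hSflip k, Nat.even_add_one, ← ih]
      tauto
  have h1 : S (m + 2) ↔ S 0 := by
    rw [hS]
    simp [Fin.natCast_self]
  have h2 : Even (m + 2) := (hkey (m + 2)).mp h1
  rw [Nat.even_iff, Nat.odd_iff] at *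
  omega

end Aux

/-- Both the ordered lift and the symmetric lift are claw-free (no induced `K_{1,3}`)
and odd-hole-free (no induced cycle of odd length at least 5). -/
theorem stmt_5 {V : Type*} [Fintype V] (G : SimpleGraph V) (r : LinearOrder V) :
    (¬ ∃ s : Set {p : V × V // r.lt p.1 p.2 ∧ G.Adj p.1 p.2},
        Nonempty (((orderedLift G r).induce s) ≃g completeBipartiteGraph (Fin 1) (Fin 3))) ∧
    (¬ ∃ (n : ℕ) (s : Set {p : V × V // r.lt p.1 p.2 ∧ G.Adj p.1 p.2}),
        Odd n ∧ 5 ≤ n ∧ Nonempty (((orderedLift G r).induce s) ≃g cycleGraph n)) ∧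
    (¬ ∃ s : Set {p : V × V // G.Adj p.1 p.2},
        Nonempty (((symLift G).induce s) ≃g completeBipartiteGraph (Fin 1) (Fin 3))) ∧
    (¬ ∃ (n : ℕ) (s : Set {p : V × V // G.Adj p.1 p.2}),
        Odd n ∧ 5 ≤ n ∧ Nonempty (((symLift G).induce s) ≃g cycleGraph n)) := by
  refine ⟨?_, ?_, ?_, ?_⟩
  · exact aux_claw (g := fun a => a.val.1) (h := fun a => a.val.2) (fun a b => Iff.rfl)
  · exact aux_hole (g := fun a => a.val.1) (h := fun a => a.val.2) (fun a b => Iff.rfl)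
  · exact aux_claw (g := fun a => a.val.1) (h := fun a => a.val.2) (fun a b => Iff.rfl)
  · exact aux_hole (g := fun a => a.val.1) (h := fun a => a.val.2) (fun a b => Iff.rfl)
end

section
/- Let G be a finite simple graph with at least one vertex that is d-regular with d ≥ 1. Then the clique number of the symmetric lift HL'₂(G) equals d: the largest size of a set of pairwise adjacent vertices in HL'₂(G) is exactly d. -/
open SimpleGraph

theorem stmt_6 {V : Type*} [Fintype V] [DecidableEq V] [Nonempty V]
    (G : SimpleGraph V) [DecidableRel G.Adj]
    (d : ℕ) (hd : 1 ≤ d) (hreg : G.IsRegularOfDegree d) :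
    (symLift G).cliqueNum = d := by
  apply le_antisymm
  · -- upper bound: every clique has size ≤ d
    obtain ⟨s, hs⟩ := (symLift G).exists_isNClique_cliqueNum
    rw [← hs.card_eq]
    by_cases hcase : ∃ a ∈ s, ∃ b ∈ s, a.val.1 ≠ b.val.1
    · -- all share second coordinate
      obtain ⟨a, ha, b, hb, hab⟩ := hcase
      have hab' : a.val.2 = b.val.2 := by
        have := hs.isClique ha hb (fun h => hab (by rw [h]))
        exact this.2.resolve_left hab
      have hsec : ∀ c ∈ s, c.val.2 = a.val.2 := by
        intro c hc
        by_cases hca : c = a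
        · rw [hca]
        by_cases hcb : c = b
        · rw [hcb, hab']
        have h1 := hs.isClique hc ha hca
        have h2 := hs.isClique hc hb hcb
        rcases h1.2 with h | h
        · rcases h2.2 with h' | h'
          · exact absurd (h.symm.trans h') hab
          · exact h'.trans hab'.symm
        · exact h
      -- map to first coordinate, lands in neighbors of a.val.2
      calc s.card = (s.image (fun c => c.val.1)).card := by
            rw [Finset.card_image_of_injOn]
            intro x hx y hy hxy
            exact Subtype.ext (Prod.ext hxy ((hsec x hx).trans (hsec y hy).symm))
        _ ≤ (G.neighborFinset a.val.2).card := by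
            apply Finset.card_le_card
            intro x hx
            simp only [Finset.mem_image] at hx
            obtain ⟨c, hc, rfl⟩ := hx
            rw [mem_neighborFinset]
            have := c.property
            rw [hsec c hc] at this
            exact this.symm
        _ = d := hreg _
    · push_neg at hcase
      by_cases hne : s.Nonempty
      · obtain ⟨a, ha⟩ := hne
        calc s.card = (s.image (fun c => c.val.2)).card := by
              rw [Finset.card_image_of_injOn]
              intro x hx y hy hxy
              exact Subtype.ext (Prod.ext ((hcase x hx a ha).trans (hcase a ha y hy)) hxy)
          _ ≤ (G.neighborFinset a.val.1).card := by
              apply Finset.card_le_card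
              intro x hx
              simp only [Finset.mem_image] at hx
              obtain ⟨c, hc, rfl⟩ := hx
              rw [mem_neighborFinset]
              have := c.property
              rw [hcase c hc a ha] at this
              exact this
          _ = d := hreg _
      · rw [Finset.not_nonempty_iff_eq_empty] at hne
        simp [hne]
  · -- lower bound: clique of size d from neighbors of any vertex
    obtain ⟨u⟩ := ‹Nonempty V›
    set t : Finset {p : V × V // G.Adj p.1 p.2} :=
      (G.neighborFinset u).attach.map
        ⟨fun v => ⟨(u, v.val), (mem_neighborFinset ..).mp v.property⟩,
         fun x y h => Subtype.ext (congrArg (fun p => p.val.2) h)⟩ with ht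
    have hclique : (symLift G).IsClique t := by
      intro x hx y hy hxy
      simp only [ht, Finset.mem_coe, Finset.mem_map, Finset.mem_attach, true_and, Function.Embedding.coeFn_mk] at hx hy
      obtain ⟨vx, rfl⟩ := hx
      obtain ⟨vy, rfl⟩ := hy
      exact ⟨hxy, Or.inl rfl⟩
    have : t.card = d := by
      rw [ht, Finset.card_map, Finset.card_attach, G.card_neighborFinset_eq_degree, hreg u]
    calc d = t.card := this.symm
      _ ≤ (symLift G).cliqueNum := IsClique.card_le_cliqueNum (tc := hclique)
end

section
/- Let G be a finite simple graph and let π be the map sending each vertex (u,v) of the symmetric lift HL'₂(G) to the unordered edge {u,v} of G. Then (i) for every edge e of G, the fiber π⁻¹(e) has exactly two elements, namely (u,v) and (v,u) where e = {u,v}; and (ii) for any two distinct edges e and f of G, e and f are adjacent in the line graph L(G) if and only if there exist vertices a ∈ π⁻¹(e) and b ∈ π⁻¹(f) that are adjacent in HL'₂(G). Consequently the quotient of HL'₂(G) by the involution (u,v) ↦ (v,u) is isomorphic to L(G). -/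
open SimpleGraph

/-- The twin relation on vertices of the symmetric lift: `(u,v)` is a twin of `(v,u)`. -/
def twinRel {V : Type*} (G : SimpleGraph V) :
    {p : V × V // G.Adj p.1 p.2} → {p : V × V // G.Adj p.1 p.2} → Prop :=
  fun a b => b.val = (a.val.2, a.val.1)

/-- The quotient of the symmetric lift by the involution `(u,v) ↦ (v,u)`: vertices are the
orbits, two distinct orbits being adjacent iff some representatives are adjacent. -/
def quotLift {V : Type*} (G : SimpleGraph V) : SimpleGraph (Quot (twinRel G)) where
  Adj c d := c ≠ d ∧ ∃ a b, Quot.mk (twinRel G) a = c ∧ Quot.mk (twinRel G) b = d ∧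
    (symLift G).Adj a b
  symm := ⟨fun c d h => ⟨h.1.symm, by
    obtain ⟨a, b, ha, hb, hab⟩ := h.2
    exact ⟨b, a, hb, ha, (symLift G).adj_symm hab⟩⟩⟩
  loopless := ⟨fun c h => h.1 rfl⟩

theorem stmt_11 {V : Type*} [Fintype V] (G : SimpleGraph V) :
    let π : {p : V × V // G.Adj p.1 p.2} → G.edgeSet :=
      fun a => ⟨s(a.val.1, a.val.2), G.mem_edgeSet.mpr a.2⟩
    -- (i) every fiber of π consists of exactly two elements, (u,v) and (v,u)
    (∀ e : G.edgeSet, ∃ a b : {p : V × V // G.Adj p.1 p.2},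
        a ≠ b ∧ b.val = (a.val.2, a.val.1) ∧ π a = e ∧ π b = e ∧
        ∀ c, π c = e → c = a ∨ c = b) ∧
    -- (ii) adjacency in the line graph corresponds to adjacency between fibers
    (∀ e f : G.edgeSet, e ≠ f →
        (G.lineGraph.Adj e f ↔ ∃ a b, π a = e ∧ π b = f ∧ (symLift G).Adj a b)) ∧
    -- consequently, the quotient of the symmetric lift by the involution is the line graph
    Nonempty (quotLift G ≃g G.lineGraph) := by
  intro π
  -- (i)
  have hi : ∀ e : G.edgeSet, ∃ a b : {p : V × V // G.Adj p.1 p.2},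
      a ≠ b ∧ b.val = (a.val.2, a.val.1) ∧ π a = e ∧ π b = e ∧
      ∀ c, π c = e → c = a ∨ c = b := by
    rintro ⟨e, he⟩
    induction e using Sym2.ind with
    | _ u v =>
      have huv : G.Adj u v := G.mem_edgeSet.mp he
      refine ⟨⟨(u, v), huv⟩, ⟨(v, u), huv.symm⟩, ?_, rfl, ?_, ?_, ?_⟩
      · intro h
        exact huv.ne (congrArg (fun x => x.val.1) h)
      · exact Subtype.ext rfl
      · exact Subtype.ext Sym2.eq_swap
      · rintro ⟨⟨x, y⟩, hxy⟩ hc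
        have : s(x, y) = s(u, v) := congrArg Subtype.val hc
        rcases Sym2.eq_iff.mp this with ⟨h1, h2⟩ | ⟨h1, h2⟩
        · subst h1; subst h2; exact Or.inl rfl
        · subst h1; subst h2; exact Or.inr rfl
  -- (ii)
  have hii : ∀ e f : G.edgeSet, e ≠ f →
      (G.lineGraph.Adj e f ↔ ∃ a b, π a = e ∧ π b = f ∧ (symLift G).Adj a b) := by
    intro e f hef
    constructor
    · intro h
      obtain ⟨-, v, hve, hvf⟩ := lineGraph_adj_iff_exists.mp h
      obtain ⟨w, hw⟩ := Sym2.mem_iff_exists.mp hve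
      obtain ⟨w', hw'⟩ := Sym2.mem_iff_exists.mp hvf
      have hvw : G.Adj v w := G.mem_edgeSet.mp (hw ▸ e.2)
      have hvw' : G.Adj v w' := G.mem_edgeSet.mp (hw' ▸ f.2)
      refine ⟨⟨(v, w), hvw⟩, ⟨(v, w'), hvw'⟩, Subtype.ext hw.symm, Subtype.ext hw'.symm,
        ?_, Or.inl rfl⟩
      intro hab
      apply hef
      rw [Subtype.ext_iff, hw, hw']
      exact congrArg (fun x => s(v, x.val.2)) hab
    · rintro ⟨a, b, ha, hb, hab, hor⟩
      refine lineGraph_adj_iff_exists.mpr ⟨hef, ?_⟩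
      rcases hor with h | h
      · exact ⟨a.val.1, by rw [← ha]; exact Sym2.mem_mk_left _ _,
          by rw [← hb, h]; exact Sym2.mem_mk_left _ _⟩
      · exact ⟨a.val.2, by rw [← ha]; exact Sym2.mem_mk_right _ _,
          by rw [← hb, h]; exact Sym2.mem_mk_right _ _⟩
  refine ⟨hi, hii, ?_⟩
  -- the quotient map
  have hresp : ∀ a b, twinRel G a b → π a = π b := by
    rintro a b hab
    apply Subtype.ext
    show s(a.val.1, a.val.2) = s(b.val.1, b.val.2)
    rw [hab]
    exact Sym2.eq_swap
  set F : Quot (twinRel G) → G.edgeSet := Quot.lift π hresp with hF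
  have hmk : ∀ a, F (Quot.mk (twinRel G) a) = π a := fun a => rfl
  have hinj : ∀ a b, π a = π b → Quot.mk (twinRel G) a = Quot.mk (twinRel G) b := by
    rintro ⟨⟨u, v⟩, huv⟩ ⟨⟨x, y⟩, hxy⟩ h
    have : s(u, v) = s(x, y) := congrArg Subtype.val h
    rcases Sym2.eq_iff.mp this with ⟨h1, h2⟩ | ⟨h1, h2⟩
    · subst h1; subst h2; rfl
    · subst h1; subst h2; exact Quot.sound rfl
  have hFinj : Function.Injective F := by
    intro c d h
    obtain ⟨a, rfl⟩ := Quot.exists_rep c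
    obtain ⟨b, rfl⟩ := Quot.exists_rep d
    exact hinj a b h
  have hFsurj : Function.Surjective F := by
    intro e
    obtain ⟨a, -, -, -, ha, -⟩ := hi e
    exact ⟨Quot.mk _ a, ha⟩
  refine ⟨⟨Equiv.ofBijective F ⟨hFinj, hFsurj⟩, ?_⟩⟩
  intro c d
  show G.lineGraph.Adj (F c) (F d) ↔ (quotLift G).Adj c d
  constructor
  · intro h
    obtain ⟨a₀, rfl⟩ := Quot.exists_rep c
    obtain ⟨b₀, rfl⟩ := Quot.exists_rep d
    have hne : F (Quot.mk _ a₀) ≠ F (Quot.mk _ b₀) := h.ne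
    obtain ⟨a, b, ha, hb, hab⟩ := (hii _ _ hne).mp h
    refine ⟨fun hcd => hne (congrArg F hcd), a, b, ?_, ?_, hab⟩
    · exact hinj a a₀ (ha.trans rfl)
    · exact hinj b b₀ (hb.trans rfl)
  · rintro ⟨hne, a, b, ha, hb, hab⟩
    have hFne : F c ≠ F d := fun h => hne (hFinj h)
    refine (hii (F c) (F d) hFne).mpr ⟨a, b, ?_, ?_, hab⟩
    · rw [← ha]
    · rw [← hb]
end

section
/- Let G be a finite simple graph with a linear order on its vertex set, let A be the adjacency matrix of the symmetric lift HL'₂(G), let A_L be the adjacency matrix of the line graph L(G), and let M(G) be the signed overlap matrix of G. Then the characteristic polynomial of A equals the product of the characteristic polynomial of A_L and the characteristic polynomial of M(G). -/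
open SimpleGraph

open scoped Classical in
/-- The signed overlap matrix `M(G)`: rows and columns are indexed by the edges of `G`,
oriented as pairs `(u,v)` with `u < v`; for distinct oriented edges the entry is `+1` if they
share a tail or a head, `-1` if they overlap crosswise, and `0` otherwise. -/
noncomputable def signedOverlap {V : Type*} (G : SimpleGraph V) (r : LinearOrder V) :
    Matrix {p : V × V // r.lt p.1 p.2 ∧ G.Adj p.1 p.2}
      {p : V × V // r.lt p.1 p.2 ∧ G.Adj p.1 p.2} ℤ :=
  fun e f =>
    if e = f then 0
    else if e.val.1 = f.val.1 ∨ e.val.2 = f.val.2 then 1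
    else if e.val.1 = f.val.2 ∨ e.val.2 = f.val.1 then -1
    else 0

open scoped Classical

section Blocks
variable {n : Type*} [DecidableEq n] [Fintype n] {R : Type*} [CommRing R]

lemma det_fromBlocks_symm' (P Q : Matrix n n R) :
    (Matrix.fromBlocks P Q Q P).det = (P + Q).det * (P - Q).det := by
  have h : (Matrix.fromBlocks 1 1 0 1 : Matrix (n ⊕ n) (n ⊕ n) R) *
      Matrix.fromBlocks P Q Q P * Matrix.fromBlocks 1 (-1) 0 1 =
      Matrix.fromBlocks (P + Q) 0 Q (P - Q) := by
    rw [Matrix.fromBlocks_multiply, Matrix.fromBlocks_multiply]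
    ext (i|i) (j|j) <;>
      simp [Matrix.fromBlocks, Matrix.one_mul, Matrix.mul_one, Matrix.zero_mul,
        Matrix.mul_zero, Matrix.mul_neg, Matrix.sub_apply, Matrix.add_apply,
        Matrix.neg_apply] <;> ring
  have h2 := congrArg Matrix.det h
  rw [Matrix.det_mul, Matrix.det_mul, Matrix.det_fromBlocks_zero₂₁,
    Matrix.det_fromBlocks_zero₂₁, Matrix.det_fromBlocks_zero₁₂, Matrix.det_one] at h2
  simpa using h2

lemma charpoly_fromBlocks_symm' (P Q : Matrix n n R) :
    (Matrix.fromBlocks P Q Q P).charpoly = (P + Q).charpoly * (P - Q).charpoly := by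
  unfold Matrix.charpoly
  rw [Matrix.charmatrix_fromBlocks, det_fromBlocks_symm']
  congr 2
  · ext i j
    by_cases h : i = j <;>
      simp [h, Matrix.add_apply, Matrix.neg_apply, Matrix.map_apply, Matrix.charmatrix_apply_eq,
        Matrix.charmatrix_apply_ne, map_add] <;> ring
  · ext i j
    by_cases h : i = j <;>
      simp [h, Matrix.sub_apply, Matrix.neg_apply, Matrix.map_apply, Matrix.charmatrix_apply_eq,
        Matrix.charmatrix_apply_ne, map_sub] <;> ring

end Blocks

open scoped Classical in
/-- The characteristic polynomial of the adjacency matrix of the symmetric lift is the product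
of the characteristic polynomials of the adjacency matrix of the line graph and of the signed
overlap matrix. -/
theorem stmt_12 {V : Type*} [Fintype V] (G : SimpleGraph V) (r : LinearOrder V) :
    ((symLift G).adjMatrix ℤ).charpoly =
      (G.lineGraph.adjMatrix ℤ).charpoly * (signedOverlap G r).charpoly := by
  letI := r
  set E := {p : V × V // r.lt p.1 p.2 ∧ G.Adj p.1 p.2} with hE
  -- basic order facts
  have hlt : ∀ e : E, e.1.1 < e.1.2 := fun e => e.2.1
  have hcross : ∀ e f : E, e.1 ≠ f.1.swap := by
    rintro e f h
    have h1 : e.1.1 = f.1.2 := congrArg Prod.fst h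
    have h2 : e.1.2 = f.1.1 := congrArg Prod.snd h
    exact absurd (h1 ▸ h2 ▸ hlt e) (lt_asymm (hlt f))
  have hdisj : ∀ e f : E, (e.1.1 = f.1.1 ∨ e.1.2 = f.1.2) →
      (e.1.1 = f.1.2 ∨ e.1.2 = f.1.1) → False := by
    rintro e f (h1|h1) (h2|h2)
    · exact (hlt f).ne (h1.symm.trans h2)
    · exact (hlt e).ne (h1.trans h2.symm)
    · exact (hlt e).ne (h2.trans h1.symm)
    · exact (hlt f).ne (h2.symm.trans h1)
  -- the sum equivalence
  let fe : E ⊕ E → {p : V × V // G.Adj p.1 p.2} :=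
    Sum.elim (fun e => ⟨e.1, e.2.2⟩) (fun e => ⟨e.1.swap, e.2.2.symm⟩)
  have hfe : Function.Bijective fe := by
    constructor
    · rintro (e|e) (f|f) h <;> simp only [fe, Sum.elim_inl, Sum.elim_inr, Subtype.mk.injEq] at h
      · exact congrArg Sum.inl (Subtype.ext h)
      · exact absurd h (hcross e f)
      · exact absurd (show e.1 = f.1.swap by simpa using congrArg Prod.swap h) (hcross e f)
      · exact congrArg Sum.inr (Subtype.ext (by simpa using congrArg Prod.swap h))
    · rintro ⟨⟨a, b⟩, hab⟩
      rcases lt_trichotomy a b with h | h | h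
      · exact ⟨Sum.inl ⟨(a, b), h, hab⟩, rfl⟩
      · exact absurd h (G.ne_of_adj hab)
      · exact ⟨Sum.inr ⟨(b, a), h, hab.symm⟩, rfl⟩
  let ee : E ⊕ E ≃ {p : V × V // G.Adj p.1 p.2} := Equiv.ofBijective fe hfe
  -- the edge equivalence
  let ge : E → G.edgeSet := fun e => ⟨s(e.1.1, e.1.2), e.2.2⟩
  have hge : Function.Bijective ge := by
    constructor
    · intro e f h
      replace h := Sym2.eq_iff.mp (congrArg Subtype.val h)
      rcases h with ⟨h1, h2⟩ | ⟨h1, h2⟩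
      · exact Subtype.ext (Prod.ext h1 h2)
      · exact absurd (Prod.ext h1 h2) (hcross e f)
    · rintro ⟨q, hq⟩
      induction q with
      | _ a b =>
        rw [SimpleGraph.mem_edgeSet] at hq
        rcases lt_trichotomy a b with h | h | h
        · exact ⟨⟨(a, b), h, hq⟩, rfl⟩
        · exact absurd h (G.ne_of_adj hq)
        · exact ⟨⟨(b, a), h, hq.symm⟩, Subtype.ext (Sym2.eq_swap)⟩
  let eg : E ≃ G.edgeSet := Equiv.ofBijective ge hge
  -- the block matrices
  let Bm : Matrix E E ℤ := fun e f =>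
    if e.val ≠ f.val ∧ (e.1.1 = f.1.1 ∨ e.1.2 = f.1.2) then 1 else 0
  let Cm : Matrix E E ℤ := fun e f =>
    if e.1.1 = f.1.2 ∨ e.1.2 = f.1.1 then 1 else 0
  -- key 1: the symmetric lift adjacency matrix in block form
  have key1 : Matrix.reindex ee.symm ee.symm ((symLift G).adjMatrix ℤ) =
      Matrix.fromBlocks Bm Cm Cm Bm := by
    ext (e|e) (f|f) <;>
      simp only [Matrix.reindex_apply, Matrix.submatrix_apply, Equiv.symm_symm,
        Matrix.fromBlocks_apply₁₁, Matrix.fromBlocks_apply₁₂, Matrix.fromBlocks_apply₂₁,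
        Matrix.fromBlocks_apply₂₂, ee, Equiv.ofBijective_apply, fe, Sum.elim_inl, Sum.elim_inr,
        SimpleGraph.adjMatrix_apply, Bm, Cm]
    · refine if_congr ?_ rfl rfl
      constructor
      · rintro ⟨h1, h2⟩; exact ⟨fun hh => h1 (Subtype.ext hh), h2⟩
      · rintro ⟨h1, h2⟩; exact ⟨fun hh => h1 (Subtype.mk_eq_mk.mp hh), h2⟩
    · refine if_congr ?_ rfl rfl
      constructor
      · rintro ⟨-, h2⟩; exact h2
      · intro h2; exact ⟨fun hh => hcross e f (Subtype.mk_eq_mk.mp hh), h2⟩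
    · refine if_congr ?_ rfl rfl
      constructor
      · rintro ⟨-, h2⟩; exact h2.symm
      · intro h2
        refine ⟨fun hh => hcross f e ?_, h2.symm⟩
        exact (Subtype.mk_eq_mk.mp hh).symm
    · refine if_congr ?_ rfl rfl
      constructor
      · rintro ⟨h1, h2⟩
        exact ⟨fun hh => h1 (Subtype.ext (congrArg Prod.swap hh)), h2.symm⟩
      · rintro ⟨h1, h2⟩
        refine ⟨fun hh => h1 ?_, h2.symm⟩
        simpa using congrArg Prod.swap (Subtype.mk_eq_mk.mp hh)
  -- key 2: line graph part
  have hne : ∀ e f : E, e.val ≠ f.val → ge e ≠ ge f := by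
    intro e f hv hh
    replace hh := Sym2.eq_iff.mp (congrArg Subtype.val hh)
    rcases hh with ⟨h1, h2⟩ | ⟨h1, h2⟩
    · exact hv (Prod.ext h1 h2)
    · exact hcross e f (Prod.ext h1 h2)
  have key2 : Bm + Cm = Matrix.reindex eg.symm eg.symm (G.lineGraph.adjMatrix ℤ) := by
    ext e f
    rw [Matrix.add_apply]
    simp only [Matrix.add_apply, Matrix.reindex_apply, Matrix.submatrix_apply, Equiv.symm_symm,
      eg, Equiv.ofBijective_apply, SimpleGraph.adjMatrix_apply, Bm, Cm]
    by_cases hv : e.val = f.val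
    · have hef : e = f := Subtype.ext hv
      subst hef
      simp [(hlt e).ne, (hlt e).ne', fun (h : G.lineGraph.Adj (ge e) (ge e)) =>
        G.lineGraph.irrefl h]
    · by_cases hB : e.1.1 = f.1.1 ∨ e.1.2 = f.1.2
      · have hC : ¬(e.1.1 = f.1.2 ∨ e.1.2 = f.1.1) := fun h => hdisj e f hB h
        have hadj : G.lineGraph.Adj (ge e) (ge f) := by
          rw [SimpleGraph.lineGraph_adj_iff_exists]
          refine ⟨hne e f hv, ?_⟩
          rcases hB with h | h
          · exact ⟨e.1.1, Sym2.mem_mk_left _ _, by rw [h]; exact Sym2.mem_mk_left _ _⟩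
          · exact ⟨e.1.2, Sym2.mem_mk_right _ _, by rw [h]; exact Sym2.mem_mk_right _ _⟩
        simp [hv, hB, hC, hadj]
      · by_cases hC : e.1.1 = f.1.2 ∨ e.1.2 = f.1.1
        · have hadj : G.lineGraph.Adj (ge e) (ge f) := by
            rw [SimpleGraph.lineGraph_adj_iff_exists]
            refine ⟨hne e f hv, ?_⟩
            rcases hC with h | h
            · exact ⟨e.1.1, Sym2.mem_mk_left _ _, by rw [h]; exact Sym2.mem_mk_right _ _⟩
            · exact ⟨e.1.2, Sym2.mem_mk_right _ _, by rw [h]; exact Sym2.mem_mk_left _ _⟩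
          simp [hv, hB, hC, hadj]
        · have hnadj : ¬ G.lineGraph.Adj (ge e) (ge f) := by
            rw [SimpleGraph.lineGraph_adj_iff_exists]
            rintro ⟨-, v, hv1, hv2⟩
            simp only [ge, Sym2.mem_iff] at hv1 hv2
            rcases hv1 with rfl | rfl <;> rcases hv2 with h | h <;> tauto
          simp [hv, hB, hC, hnadj]
  -- key 3: signed overlap part
  have key3 : Bm - Cm = signedOverlap G r := by
    ext e f
    rw [Matrix.sub_apply]
    simp only [Matrix.sub_apply, Bm, Cm, signedOverlap]
    by_cases hef : e = f
    · subst hef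
      simp [(hlt e).ne, (hlt e).ne']
    · have hv : e.val ≠ f.val := fun h => hef (Subtype.ext h)
      by_cases hB : e.1.1 = f.1.1 ∨ e.1.2 = f.1.2
      · have hC : ¬(e.1.1 = f.1.2 ∨ e.1.2 = f.1.1) := fun h => hdisj e f hB h
        simp [hef, hv, hB, hC]
      · by_cases hC : e.1.1 = f.1.2 ∨ e.1.2 = f.1.1 <;> simp [hef, hv, hB, hC]
  calc ((symLift G).adjMatrix ℤ).charpoly
      = (Matrix.reindex ee.symm ee.symm ((symLift G).adjMatrix ℤ)).charpoly :=
        (Matrix.charpoly_reindex _ _).symm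
    _ = (Bm + Cm).charpoly * (Bm - Cm).charpoly := by
        rw [key1, charpoly_fromBlocks_symm']
    _ = _ := by
        rw [key2, key3, Matrix.charpoly_reindex]
end

section
/- Let G be a finite simple d-regular graph on n vertices with d ≥ 2, and let λ₁, …, λₙ be the eigenvalues (with multiplicity) of the adjacency matrix of G over the reals. Then the multiset of eigenvalues (with multiplicity) of the adjacency matrix of the symmetric lift HL'₂(G) is {d − 2 + λᵢ : i = 1, …, n} ∪ {d − 2 − λᵢ : i = 1, …, n} ∪ {−2 repeated n(d − 2) times}. Equivalently, writing p(X) for the characteristic polynomial of the adjacency matrix of G, the characteristic polynomial of the adjacency matrix of HL'₂(G) equals (−1)ⁿ (X + 2)^{n(d−2)} · p(X − (d − 2)) · p((d − 2) − X). -/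
open SimpleGraph

open Polynomial in
private lemma my_eval_charpoly {m : Type*} [Fintype m] [DecidableEq m] (M : Matrix m m ℝ)
    (x : ℝ) : M.charpoly.eval x = (x • (1 : Matrix m m ℝ) - M).det := by
  rw [Matrix.charpoly, ← Polynomial.coe_evalRingHom, RingHom.map_det]
  congr 1
  ext i j
  by_cases h : i = j <;>
    simp [Matrix.charmatrix_apply, h, Matrix.one_apply, Matrix.diagonal_apply]

open Polynomial in
open scoped Classical in
/-- For a `d`-regular graph `G` on `n` vertices with characteristic polynomial `p` of its
adjacency matrix, the characteristic polynomial of the adjacency matrix of the symmetric lift is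
`(-1)^n (X + 2)^(n(d-2)) ⬝ p(X - (d-2)) ⬝ p((d-2) - X)`; equivalently, its eigenvalue multiset is
`{d - 2 + λᵢ} ∪ {d - 2 - λᵢ} ∪ {-2 repeated n(d-2) times}`. -/
theorem stmt_14 {V : Type*} [Fintype V] (G : SimpleGraph V)
    (d : ℕ) (hd : 2 ≤ d) (hreg : G.IsRegularOfDegree d) :
    ((symLift G).adjMatrix ℝ).charpoly =
      (-1) ^ (Fintype.card V) * (X + C 2) ^ (Fintype.card V * (d - 2)) *
        ((G.adjMatrix ℝ).charpoly.comp (X - C ((d : ℝ) - 2))) *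
        ((G.adjMatrix ℝ).charpoly.comp (C ((d : ℝ) - 2) - X)) := by
  classical
  set n := Fintype.card V with hn
  set A : Matrix V V ℝ := G.adjMatrix ℝ with hA
  set P := {p : V × V // G.Adj p.1 p.2} with hP
  set U : Matrix P (V ⊕ V) ℝ := fun a w =>
    Sum.elim (fun u => if a.val.1 = u then 1 else 0) (fun v => if a.val.2 = v then 1 else 0) w
    with hU
  have hUapp : ∀ a w, U a w = Sum.elim (fun u => if a.val.1 = u then (1:ℝ) else 0)
      (fun v => if a.val.2 = v then 1 else 0) w := fun a w => rfl
  -- sums over `P` as sums over `V × V`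
  have hsum : ∀ f : V × V → ℝ,
      ∑ a : P, f a.val = ∑ p : V × V, if G.Adj p.1 p.2 then f p else 0 := by
    intro f
    rw [← Finset.sum_filter]
    exact (Finset.sum_subtype _ (by simp) f).symm
  have hdeg : ∀ w : V, ∑ v : V, (if G.Adj w v then (1:ℝ) else 0) = d := by
    intro w
    rw [Finset.sum_boole, ← SimpleGraph.neighborFinset_eq_filter]
    rw [show (G.neighborFinset w).card = G.degree w from rfl, hreg w]
  -- cardinality of P
  have hcardP : Fintype.card P = n * d := by
    have e : P ≃ G.Dart :=
      ⟨fun a => ⟨a.val, a.prop⟩, fun dd => ⟨dd.toProd, dd.adj⟩, fun a => rfl, fun dd => rfl⟩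
    rw [Fintype.card_congr e, G.dart_card_eq_sum_degrees,
      Finset.sum_congr rfl fun v _ => hreg v]
    simp [hn, mul_comm]
  -- the adjacency matrix of the symmetric lift
  have hadj : ((symLift G).adjMatrix ℝ) = U * U.transpose - (2 : ℝ) • 1 := by
    ext a b
    have hmul : (U * U.transpose) a b =
        (if a.val.1 = b.val.1 then (1:ℝ) else 0) + (if a.val.2 = b.val.2 then 1 else 0) := by
      simp [Matrix.mul_apply, Matrix.transpose_apply, hUapp, Fintype.sum_sum_type,
        ite_and, mul_ite, mul_one, mul_zero, Finset.sum_ite_eq]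
    simp only [Matrix.sub_apply, Matrix.smul_apply, Matrix.one_apply, hmul,
      SimpleGraph.adjMatrix_apply]
    by_cases hab : a = b
    · subst hab; simp [symLift]; norm_num
    · have hne : ¬ (a.val.1 = b.val.1 ∧ a.val.2 = b.val.2) := by
        rintro ⟨h1, h2⟩
        exact hab (Subtype.ext (Prod.ext h1 h2))
      simp only [symLift, hab, if_neg hab, smul_zero]
      by_cases h1 : a.val.1 = b.val.1 <;> by_cases h2 : a.val.2 = b.val.2 <;>
        simp_all <;> norm_num
  -- the Gram matrix on the other side
  have hUtU : U.transpose * U = Matrix.fromBlocks ((d : ℝ) • 1) A A ((d : ℝ) • 1) := by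
    ext w z
    rcases w with w | w <;> rcases z with z | z <;>
      simp only [Matrix.mul_apply, Matrix.transpose_apply, hUapp, Sum.elim_inl, Sum.elim_inr,
        Matrix.fromBlocks_apply₁₁, Matrix.fromBlocks_apply₁₂, Matrix.fromBlocks_apply₂₁,
        Matrix.fromBlocks_apply₂₂]
    · rw [hsum (fun p => (if p.1 = w then 1 else 0) * if p.1 = z then (1:ℝ) else 0),
        Fintype.sum_prod_type,
        Finset.sum_eq_single w (fun u _ hu => by simp [hu]) (by simp)]
      by_cases hwz : w = z
      · subst hwz
        simpa using hdeg w
      · simp [hwz, Matrix.one_apply_ne hwz]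
    · rw [hsum (fun p => (if p.1 = w then 1 else 0) * if p.2 = z then (1:ℝ) else 0),
        Fintype.sum_prod_type,
        Finset.sum_eq_single w (fun u _ hu => by simp [hu]) (by simp),
        Finset.sum_eq_single z (fun v _ hv => by simp [hv]) (by simp)]
      simp [hA]
    · rw [hsum (fun p => (if p.2 = w then 1 else 0) * if p.1 = z then (1:ℝ) else 0),
        Fintype.sum_prod_type,
        Finset.sum_eq_single z (fun u _ hu => by simp [hu]) (by simp),
        Finset.sum_eq_single w (fun v _ hv => by simp [hv]) (by simp)]
      simp [hA, G.adj_comm]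
    · rw [hsum (fun p => (if p.2 = w then 1 else 0) * if p.2 = z then (1:ℝ) else 0),
        Fintype.sum_prod_type]
      have h1 : ∀ u : V, (∑ v : V, if G.Adj u v then
          (if v = w then 1 else 0) * if v = z then (1:ℝ) else 0 else 0)
          = if G.Adj u w then (if w = z then (1:ℝ) else 0) else 0 := fun u =>
        Finset.sum_eq_single w (fun v _ hv => by simp [hv]) (by simp) |>.trans (by simp)
      rw [Finset.sum_congr rfl fun u _ => h1 u]
      by_cases hwz : w = z
      · subst hwz
        have h2 : ∀ u : V, (if G.Adj u w then (if w = w then (1:ℝ) else 0) else 0)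
            = if G.Adj w u then 1 else 0 := fun u => by simp [G.adj_comm]
        rw [Finset.sum_congr rfl fun u _ => h2 u]
        simpa using hdeg w
      · simp [hwz, Matrix.one_apply_ne hwz]
  -- now compare evaluations on a cofinite set
  apply Polynomial.eq_of_infinite_eval_eq
  apply Set.Infinite.mono (s := ({-2, (d : ℝ) - 2} : Set ℝ)ᶜ)
  swap
  · exact Set.Finite.infinite_compl (Set.toFinite _)
  intro x hx
  simp only [Set.mem_compl_iff, Set.mem_insert_iff, Set.mem_singleton_iff, not_or] at hx
  obtain ⟨hx2, hxd⟩ := hx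
  simp only [Set.mem_setOf_eq]
  set y : ℝ := x + 2 with hy
  have hy0 : y ≠ 0 := fun h => hx2 (by rw [hy] at h; linarith)
  set c : ℝ := y - d with hc
  have hc0 : c ≠ 0 := fun h => hxd (by rw [hc, hy] at h; linarith)
  -- key determinant identity 1 (Weinstein–Aronszajn)
  have key1 : (y • (1 : Matrix P P ℝ) - U * U.transpose).det
      = y ^ (n * (d - 2)) * (y • (1 : Matrix (V ⊕ V) (V ⊕ V) ℝ) - U.transpose * U).det := by
    have e1 : y • (1 : Matrix P P ℝ) - U * U.transpose
        = y • ((1 : Matrix P P ℝ) + U * ((-(y⁻¹)) • U.transpose)) := by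
      rw [Matrix.mul_smul, smul_add, smul_smul, mul_neg, mul_inv_cancel₀ hy0, neg_smul,
        one_smul, ← sub_eq_add_neg]
    have e2 : y • (1 : Matrix (V ⊕ V) (V ⊕ V) ℝ) - U.transpose * U
        = y • ((1 : Matrix (V ⊕ V) (V ⊕ V) ℝ) + ((-(y⁻¹)) • U.transpose) * U) := by
      rw [Matrix.smul_mul, smul_add, smul_smul, mul_neg, mul_inv_cancel₀ hy0, neg_smul,
        one_smul, ← sub_eq_add_neg]
    rw [e1, e2, Matrix.det_smul, Matrix.det_smul, Matrix.det_one_add_mul_comm, hcardP,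
      Fintype.card_sum, ← hn]
    have hexp : n * d = n * (d - 2) + (n + n) := by
      have h2 : n + n = n * 2 := by ring
      rw [h2, ← Nat.mul_add, Nat.sub_add_cancel hd]
    rw [hexp, pow_add, mul_assoc]
  -- key determinant identity 2 (block determinant)
  have key2 : (y • (1 : Matrix (V ⊕ V) (V ⊕ V) ℝ) - U.transpose * U).det
      = (c • (1 : Matrix V V ℝ) - A).det * (c • (1 : Matrix V V ℝ) + A).det := by
    have hblock : y • (1 : Matrix (V ⊕ V) (V ⊕ V) ℝ) - U.transpose * U
        = Matrix.fromBlocks (c • 1) (-A) (-A) (c • 1) := by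
      rw [hUtU, ← Matrix.fromBlocks_one, Matrix.fromBlocks_smul, sub_eq_add_neg,
        Matrix.fromBlocks_neg, Matrix.fromBlocks_add]
      congr 1 <;> simp [hc, sub_smul, sub_eq_add_neg, add_smul, neg_smul]
    haveI : Invertible (c • (1 : Matrix V V ℝ)) :=
      ⟨c⁻¹ • 1,
        by rw [Matrix.smul_mul, Matrix.one_mul, smul_smul, inv_mul_cancel₀ hc0, one_smul],
        by rw [Matrix.smul_mul, Matrix.one_mul, smul_smul, mul_inv_cancel₀ hc0, one_smul]⟩
    have hinv : ⅟(c • (1 : Matrix V V ℝ)) = c⁻¹ • 1 :=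
      invOf_eq_right_inv
        (by rw [Matrix.smul_mul, Matrix.one_mul, smul_smul, mul_inv_cancel₀ hc0, one_smul])
    have h5 : (-A) * (c⁻¹ • (1:Matrix V V ℝ)) * (-A) = c⁻¹ • (A * A) := by
      simp [Matrix.mul_smul, Matrix.smul_mul, Matrix.neg_mul, Matrix.mul_neg, neg_neg,
        Matrix.mul_one]
    have h3 : c • (1:Matrix V V ℝ) - (-A) * (c⁻¹ • (1:Matrix V V ℝ)) * (-A)
        = c⁻¹ • ((c*c) • (1:Matrix V V ℝ) - A*A) := by
      have hcc : c⁻¹ * (c * c) = c := by field_simp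
      rw [h5, smul_sub, smul_smul, hcc]
    have h4 : (c*c) • (1:Matrix V V ℝ) - A*A = (c • 1 - A) * (c • 1 + A) := by
      simp only [Matrix.sub_mul, Matrix.mul_add, Matrix.smul_mul, Matrix.mul_smul,
        Matrix.one_mul, Matrix.mul_one, smul_smul]
      module
    rw [hblock, Matrix.det_fromBlocks₂₂, hinv, h3, h4, Matrix.det_smul, Matrix.det_smul,
      Matrix.det_one, mul_one, Matrix.det_mul, ← hn]
    rw [← mul_assoc, ← mul_pow, mul_inv_cancel₀ hc0, one_pow, one_mul]
  -- evaluate both sides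
  have hL : (((symLift G).adjMatrix ℝ).charpoly).eval x
      = y ^ (n * (d - 2)) * ((c • (1 : Matrix V V ℝ) - A).det
        * (c • (1 : Matrix V V ℝ) + A).det) := by
    rw [my_eval_charpoly, hadj]
    have : x • (1 : Matrix P P ℝ) - (U * U.transpose - (2:ℝ) • 1)
        = y • (1 : Matrix P P ℝ) - U * U.transpose := by
      rw [sub_sub_eq_add_sub, hy, add_smul]
    rw [this, key1, key2]
  rw [hL]
  -- right-hand side
  have hR1 : A.charpoly.eval (x - ((d:ℝ) - 2)) = (c • (1 : Matrix V V ℝ) - A).det := by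
    rw [my_eval_charpoly]
    congr 2
    rw [hc, hy]; ring
  have hR2 : A.charpoly.eval (((d:ℝ) - 2) - x) = (-1)^n * (c • (1 : Matrix V V ℝ) + A).det := by
    rw [my_eval_charpoly]
    have : ((d:ℝ) - 2 - x) • (1 : Matrix V V ℝ) - A = -(c • (1 : Matrix V V ℝ) + A) := by
      rw [neg_add, ← neg_smul, hc, hy]
      congr 1
      ring
    rw [this, Matrix.det_neg, ← hn]
  simp only [Polynomial.eval_mul, Polynomial.eval_pow, Polynomial.eval_comp,
    Polynomial.eval_add, Polynomial.eval_sub, Polynomial.eval_C, Polynomial.eval_X,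
    Polynomial.eval_neg, Polynomial.eval_one, ← hA, ← hn, hR1, hR2]
  have hsign : (-1:ℝ)^n * (-1:ℝ)^n = 1 := by
    rw [← pow_add, ← two_mul, pow_mul]; norm_num
  rw [← hy]
  linear_combination (-(y ^ (n*(d-2))) * (c • (1 : Matrix V V ℝ) - A).det
    * (c • (1 : Matrix V V ℝ) + A).det) * hsign
end

section
/- Let n ≥ 4 and let Kₙ be the complete graph on n vertices. Then the symmetric lift HL'₂(Kₙ) has n(n − 1) vertices, is regular of degree 2(n − 2), and the multiset of eigenvalues (with multiplicity) of its adjacency matrix over the reals is: 2(n − 2) with multiplicity 1, n − 2 with multiplicity n − 1, n − 4 with multiplicity n − 1, and −2 with multiplicity n(n − 3) + 1. -/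
open SimpleGraph Matrix Polynomial Finset

namespace Stmt16Aux



variable {F : Type*} [Field F]

lemma eval_charpoly' {m : Type*} [Fintype m] [DecidableEq m] (M : Matrix m m F) (x : F) :
    (M.charpoly).eval x = (x • (1 : Matrix m m F) - M).det := by
  have : (M.charpoly).eval x = (Polynomial.evalRingHom x) M.charpoly := rfl
  rw [this, Matrix.charpoly, RingHom.map_det]
  congr 1
  ext i j
  by_cases h : i = j
  · subst h
    simp [Matrix.charmatrix_apply_eq, Matrix.one_apply]
  · simp [Matrix.charmatrix_apply_ne _ _ _ h, Matrix.one_apply_ne h]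

lemma det_smul_one_sub_aux {l : Type*} [Fintype l] [DecidableEq l] {y : F} (hy : y ≠ 0)
    (M : Matrix l l F) :
    (y • (1 : Matrix l l F) - M).det = y ^ Fintype.card l * (1 - y⁻¹ • M).det := by
  rw [← Matrix.det_smul, smul_sub, smul_smul, mul_inv_cancel₀ hy, one_smul]

lemma det_smul_one_sub_mul {m k : Type*} [Fintype m] [Fintype k] [DecidableEq m] [DecidableEq k]
    {y : F} (hy : y ≠ 0) (A : Matrix m k F) (B : Matrix k m F) :
    y ^ (Fintype.card k) * (y • (1 : Matrix m m F) - A * B).det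
      = y ^ (Fintype.card m) * (y • (1 : Matrix k k F) - B * A).det := by
  rw [det_smul_one_sub_aux hy (A * B), det_smul_one_sub_aux hy (B * A)]
  have h2 : (1 - y⁻¹ • (A * B)).det = (1 - y⁻¹ • (B * A)).det := by
    have := Matrix.det_one_sub_mul_comm (y⁻¹ • A) B
    simpa [Matrix.smul_mul, Matrix.mul_smul] using this
  rw [h2]
  ring

lemma det_smul_one_add_smul_const {m : Type*} [Fintype m] [DecidableEq m] [Nonempty m]
    (α β : F) (hα : α ≠ 0) :
    (α • (1 : Matrix m m F) + β • Matrix.of (fun _ _ : m => (1 : F))).det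
      = α ^ (Fintype.card m - 1) * (α + Fintype.card m * β) := by
  have key : α • (1 : Matrix m m F) + β • Matrix.of (fun _ _ : m => (1 : F))
      = α • (1 + Matrix.replicateCol Unit (fun _ => (1:F)) * Matrix.replicateRow Unit (fun _ => α⁻¹ * β)) := by
    ext i j
    simp [Matrix.mul_apply, Matrix.one_apply, mul_comm, mul_assoc]
    by_cases h : i = j <;> simp [h] <;> field_simp
  rw [key, Matrix.det_smul, Matrix.det_one_add_replicateCol_mul_replicateRow]
  have hc : 1 ≤ Fintype.card m := Fintype.card_pos
  have : α ^ Fintype.card m = α ^ (Fintype.card m - 1) * α := by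
    rw [← pow_succ, Nat.sub_add_cancel hc]
  rw [this]
  have : (fun _ : m => α⁻¹ * β) ⬝ᵥ (fun _ => 1) = (Fintype.card m : F) * (α⁻¹ * β) := by
    simp [dotProduct, mul_comm]
  rw [this]
  field_simp




lemma card_filter_ne {n : ℕ} {u w : Fin n} (huw : u ≠ w) :
    ((univ : Finset (Fin n)).filter (fun y => y ≠ u ∧ y ≠ w)).card = n - 2 := by
  classical
  have h : (univ : Finset (Fin n)).filter (fun y => y ≠ u ∧ y ≠ w) = univ \ {u, w} := by
    ext y
    simp [not_or]
  rw [h, Finset.card_sdiff_of_subset (Finset.subset_univ _)]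
  simp [Finset.card_insert_of_notMem, huw]

lemma card_Vt (n : ℕ) [Fintype {p : Fin n × Fin n // (completeGraph (Fin n)).Adj p.1 p.2}] :
    Fintype.card {p : Fin n × Fin n // (completeGraph (Fin n)).Adj p.1 p.2} = n * (n - 1) := by
  classical
  have h1 : Fintype.card {p : Fin n × Fin n // (completeGraph (Fin n)).Adj p.1 p.2}
      = Fintype.card {p : Fin n × Fin n // ¬ (p.1 = p.2)} :=
    Fintype.card_congr (Equiv.subtypeEquivRight (fun p => Iff.rfl))
  have h2 : Fintype.card {p : Fin n × Fin n // p.1 = p.2} = n := by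
    have e : {p : Fin n × Fin n // p.1 = p.2} ≃ Fin n :=
      ⟨fun p => p.val.1, fun x => ⟨(x, x), rfl⟩, fun p => by
        obtain ⟨⟨a, b⟩, hp⟩ := p
        simp only at hp
        subst hp
        rfl, fun x => rfl⟩
    simpa using Fintype.card_congr e
  rw [h1, Fintype.card_subtype_compl, h2]
  simp only [Fintype.card_prod, Fintype.card_fin]
  cases n with
  | zero => rfl
  | succ k => simp only [Nat.succ_sub_one, Nat.mul_succ, Nat.succ_mul]; omega




/-- the incidence-type matrix -/
def Emat (n : ℕ) : Matrix {p : Fin n × Fin n // (completeGraph (Fin n)).Adj p.1 p.2}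
    (Fin n ⊕ Fin n) ℝ :=
  Matrix.of fun p w => Sum.elim (fun a => if p.val.1 = a then 1 else 0)
    (fun a => if p.val.2 = a then 1 else 0) w

def Jmat (n : ℕ) : Matrix (Fin n) (Fin n) ℝ := Matrix.of fun _ _ => 1

lemma mul_EEt (n : ℕ) [Fintype {p : Fin n × Fin n // (completeGraph (Fin n)).Adj p.1 p.2}]
    (p q : {p : Fin n × Fin n // (completeGraph (Fin n)).Adj p.1 p.2}) :
    (Emat n * (Emat n)ᵀ) p q
      = (if p.val.1 = q.val.1 then 1 else 0) + (if p.val.2 = q.val.2 then 1 else 0) := by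
  classical
  have key : ∀ a b : Fin n, (∑ t, (if a = t then (1:ℝ) else 0) * (if b = t then 1 else 0))
      = if a = b then 1 else 0 := by
    intro a b
    simp [ite_mul, Finset.sum_ite_eq, eq_comm]
  simp [Matrix.mul_apply, Matrix.transpose_apply, Emat, Fintype.sum_sum_type, key]

lemma smul_one_sub_adj (n : ℕ)
    [Fintype {p : Fin n × Fin n // (completeGraph (Fin n)).Adj p.1 p.2}]
    [DecidableEq {p : Fin n × Fin n // (completeGraph (Fin n)).Adj p.1 p.2}]
    [DecidableRel (symLift (completeGraph (Fin n))).Adj] (x : ℝ) :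
    x • (1 : Matrix {p : Fin n × Fin n // (completeGraph (Fin n)).Adj p.1 p.2}
        {p : Fin n × Fin n // (completeGraph (Fin n)).Adj p.1 p.2} ℝ)
      - (symLift (completeGraph (Fin n))).adjMatrix ℝ
    = (x + 2) • 1 - Emat n * (Emat n)ᵀ := by
  classical
  ext p q
  rw [Matrix.sub_apply, Matrix.sub_apply, mul_EEt]
  by_cases hpq : p = q
  · subst hpq
    simp [SimpleGraph.adjMatrix_apply, (symLift (completeGraph (Fin n))).irrefl]
    ring
  · have hval : p.val ≠ q.val := fun h => hpq (Subtype.ext h)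
    have hadj : (symLift (completeGraph (Fin n))).Adj p q
        ↔ (p.val.1 = q.val.1 ∨ p.val.2 = q.val.2) := by
      constructor
      · rintro ⟨-, h⟩; exact h
      · intro h; exact ⟨hpq, h⟩
    have hA : ((symLift (completeGraph (Fin n))).adjMatrix ℝ) p q
        = (if (p.val.1 = q.val.1 ∨ p.val.2 = q.val.2) then (1:ℝ) else 0) := by
      rw [SimpleGraph.adjMatrix_apply]
      exact if_congr hadj rfl rfl
    rw [hA, Matrix.smul_apply, Matrix.smul_apply, Matrix.one_apply_ne hpq]
    by_cases h1 : p.val.1 = q.val.1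
    · have h2 : p.val.2 ≠ q.val.2 := fun h2 => hval (Prod.ext h1 h2)
      simp [h1, h2]
    · by_cases h2 : p.val.2 = q.val.2
      · simp [h1, h2]
      · simp [h1, h2]

lemma sum_Vt (n : ℕ) [Fintype {p : Fin n × Fin n // (completeGraph (Fin n)).Adj p.1 p.2}]
    (f : Fin n × Fin n → ℝ) :
    ∑ p : {p : Fin n × Fin n // (completeGraph (Fin n)).Adj p.1 p.2}, f p.val
      = ∑ p : Fin n × Fin n, if p.1 ≠ p.2 then f p else 0 := by
  classical
  rw [← Finset.sum_filter]
  exact (Finset.sum_subtype _ (fun x => by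
    simp only [Finset.mem_filter, Finset.mem_univ, true_and]; exact Iff.rfl) f).symm

lemma sum_pair (n : ℕ) (f g : Fin n → ℝ) :
    ∑ p : Fin n × Fin n, (if p.1 ≠ p.2 then f p.1 * g p.2 else 0)
      = (∑ x, f x) * (∑ y, g y) - ∑ x, f x * g x := by
  classical
  rw [Fintype.sum_prod_type]
  have h : ∀ x y : Fin n, (if x ≠ y then f x * g y else 0)
      = f x * g y - (if x = y then f x * g y else 0) := by
    intro x y; by_cases h : x = y <;> simp [h]
  calc ∑ x, ∑ y, (if x ≠ y then f x * g y else 0)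
      = ∑ x, ((f x * ∑ y, g y) - f x * g x) := by
        refine Finset.sum_congr rfl fun x _ => ?_
        rw [Finset.sum_congr rfl fun y _ => h x y, Finset.sum_sub_distrib,
          Finset.sum_ite_eq, ← Finset.mul_sum]
        simp
    _ = (∑ x, f x) * (∑ y, g y) - ∑ x, f x * g x := by
        rw [Finset.sum_sub_distrib, ← Finset.sum_mul]

lemma sum_ind (n : ℕ) (a b : Fin n) :
    ∑ x : Fin n, (if x = a then (1:ℝ) else 0) * (if x = b then 1 else 0)
      = if a = b then 1 else 0 := by
  classical
  simp only [ite_mul, one_mul, zero_mul, Finset.sum_ite_eq']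
  simp [eq_comm]

lemma mul_EtE (n : ℕ) [Fintype {p : Fin n × Fin n // (completeGraph (Fin n)).Adj p.1 p.2}] :
    (Emat n)ᵀ * Emat n
      = Matrix.fromBlocks (((n : ℝ) - 1) • 1) (Jmat n - 1) (Jmat n - 1) (((n : ℝ) - 1) • 1) := by
  classical
  have hone : (∑ _x : Fin n, (1:ℝ)) = n := by simp
  ext w z
  rw [Matrix.mul_apply]
  cases w with
  | inl a =>
    cases z with
    | inl b =>
      simp only [Matrix.transpose_apply, Emat, Matrix.of_apply, Sum.elim_inl,
        Matrix.fromBlocks_apply₁₁]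
      rw [sum_Vt n (fun p => (if p.1 = a then (1:ℝ) else 0) * (if p.1 = b then 1 else 0))]
      have := sum_pair n (fun x => (if x = a then (1:ℝ) else 0) * (if x = b then 1 else 0))
        (fun _ => 1)
      simp only [mul_one] at this
      rw [this, sum_ind, Matrix.smul_apply]
      by_cases hab : a = b
      · subst hab
        rw [Matrix.one_apply_eq, hone]
        simp
      · rw [Matrix.one_apply_ne hab]
        simp [hab]
    | inr b =>
      simp only [Matrix.transpose_apply, Emat, Matrix.of_apply, Sum.elim_inl, Sum.elim_inr,
        Matrix.fromBlocks_apply₁₂]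
      rw [sum_Vt n (fun p => (if p.1 = a then (1:ℝ) else 0) * (if p.2 = b then 1 else 0))]
      rw [sum_pair n (fun x => if x = a then (1:ℝ) else 0) (fun y => if y = b then 1 else 0),
        sum_ind]
      simp only [Matrix.sub_apply, Jmat, Matrix.of_apply, Matrix.one_apply]
      by_cases hab : a = b <;> simp [hab]
  | inr a =>
    cases z with
    | inl b =>
      simp only [Matrix.transpose_apply, Emat, Matrix.of_apply, Sum.elim_inl, Sum.elim_inr,
        Matrix.fromBlocks_apply₂₁]
      rw [sum_Vt n (fun p => (if p.2 = a then (1:ℝ) else 0) * (if p.1 = b then 1 else 0))]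
      have h2 : ∀ p : Fin n × Fin n,
          (if p.1 ≠ p.2 then (if p.2 = a then (1:ℝ) else 0) * (if p.1 = b then 1 else 0) else 0)
          = (if p.1 ≠ p.2 then (if p.1 = b then (1:ℝ) else 0) * (if p.2 = a then 1 else 0) else 0) := by
        intro p; ring_nf
      rw [Finset.sum_congr rfl fun p _ => h2 p]
      rw [sum_pair n (fun x => if x = b then (1:ℝ) else 0) (fun y => if y = a then 1 else 0),
        sum_ind]
      simp only [Matrix.sub_apply, Jmat, Matrix.of_apply, Matrix.one_apply]
      by_cases hab : a = b
      · simp [hab]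
      · have : ¬ b = a := fun h => hab h.symm
        simp [hab, this]
    | inr b =>
      simp only [Matrix.transpose_apply, Emat, Matrix.of_apply, Sum.elim_inr,
        Matrix.fromBlocks_apply₂₂]
      rw [sum_Vt n (fun p => (if p.2 = a then (1:ℝ) else 0) * (if p.2 = b then 1 else 0))]
      have h2 : ∀ p : Fin n × Fin n,
          (if p.1 ≠ p.2 then (if p.2 = a then (1:ℝ) else 0) * (if p.2 = b then 1 else 0) else 0)
          = (if p.1 ≠ p.2 then (1:ℝ) * ((if p.2 = a then (1:ℝ) else 0) * (if p.2 = b then 1 else 0)) else 0) := by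
        intro p; ring_nf
      rw [Finset.sum_congr rfl fun p _ => h2 p]
      rw [sum_pair n (fun _ => (1:ℝ))
        (fun y => (if y = a then (1:ℝ) else 0) * (if y = b then 1 else 0)), hone]
      have h3 : ∑ y : Fin n, (if y = a then (1:ℝ) else 0) * (if y = b then 1 else 0)
          = if a = b then 1 else 0 := sum_ind n a b
      have h4 : ∑ y : Fin n, 1 * ((if y = a then (1:ℝ) else 0) * (if y = b then 1 else 0))
          = if a = b then 1 else 0 := by rw [← h3]; simp
      rw [h3, h4, Matrix.smul_apply]
      by_cases hab : a = b
      · subst hab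
        rw [Matrix.one_apply_eq]
        simp
      · rw [Matrix.one_apply_ne hab]
        simp [hab]

lemma JJ (n : ℕ) : Jmat n * Jmat n = (n : ℝ) • Jmat n := by
  ext i j
  simp [Jmat, Matrix.mul_apply]

lemma det_block (n : ℕ) (hn : 1 ≤ n) (c : ℝ) (hc : c ≠ 0) (hα : c - c⁻¹ ≠ 0) :
    (Matrix.fromBlocks (c • 1) (-(Jmat n - 1)) (-(Jmat n - 1))
        (c • (1 : Matrix (Fin n) (Fin n) ℝ))).det
      = ((c - 1) * (c + 1)) ^ (n - 1) * ((c - ((n:ℝ) - 1)) * (c + ((n:ℝ) - 1))) := by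
  haveI : Nonempty (Fin n) := Fin.pos_iff_nonempty.mp (by omega)
  letI : Invertible (c • (1 : Matrix (Fin n) (Fin n) ℝ)) :=
    ⟨c⁻¹ • 1, by rw [Matrix.smul_mul, Matrix.mul_smul, smul_smul, inv_mul_cancel₀ hc, one_smul,
        one_mul], by rw [Matrix.smul_mul, Matrix.mul_smul, smul_smul, mul_inv_cancel₀ hc, one_smul,
        one_mul]⟩
  rw [Matrix.det_fromBlocks₂₂]
  have hinv : ⅟(c • (1 : Matrix (Fin n) (Fin n) ℝ)) = c⁻¹ • 1 := rfl
  rw [hinv]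
  have hK : (Jmat n - 1) * (Jmat n - 1) = ((n:ℝ) - 2) • Jmat n + 1 := by
    rw [sub_mul, mul_sub, mul_sub, JJ, mul_one, one_mul, one_mul, sub_smul]
    have h2 : (2 : ℝ) • Jmat n = Jmat n + Jmat n := two_smul ℝ _
    rw [h2]
    abel
  have hBC : (-(Jmat n - 1)) * (c⁻¹ • 1) * (-(Jmat n - 1)) = c⁻¹ • (((n:ℝ) - 2) • Jmat n + 1) := by
    rw [Matrix.mul_smul, Matrix.mul_one, Matrix.smul_mul, neg_mul_neg, hK]
  rw [hBC]
  have hSchur : c • (1 : Matrix (Fin n) (Fin n) ℝ) - c⁻¹ • (((n:ℝ) - 2) • Jmat n + 1)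
      = (c - c⁻¹) • 1 + (-(c⁻¹ * ((n:ℝ) - 2))) • Jmat n := by
    rw [smul_add, smul_smul, sub_smul, neg_smul]
    abel
  rw [hSchur]
  have hdet1 : (c • (1 : Matrix (Fin n) (Fin n) ℝ)).det = c ^ n := by
    rw [Matrix.det_smul, Matrix.det_one, Fintype.card_fin, mul_one]
  have hdet2 := det_smul_one_add_smul_const (m := Fin n) (c - c⁻¹) (-(c⁻¹ * ((n:ℝ) - 2))) hα
  rw [Fintype.card_fin] at hdet2
  have hJ : (Jmat n : Matrix (Fin n) (Fin n) ℝ) = Matrix.of (fun _ _ => (1:ℝ)) := rfl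
  rw [hdet1, hJ, hdet2]
  -- now pure algebra
  have e1 : c - c⁻¹ = ((c - 1) * (c + 1)) * c⁻¹ := by field_simp; ring
  have e2 : c ^ n = c * c ^ (n - 1) := by
    rw [← pow_succ', Nat.sub_add_cancel hn]
  rw [e1, mul_pow, e2]
  have e3 : (c⁻¹) ^ (n - 1) * c ^ (n - 1) = 1 := by
    rw [← mul_pow, inv_mul_cancel₀ hc, one_pow]
  have e4 : c * (((c - 1) * (c + 1)) * c⁻¹ + (n:ℝ) * -(c⁻¹ * ((n:ℝ) - 2)))
      = (c - ((n:ℝ) - 1)) * (c + ((n:ℝ) - 1)) := by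
    field_simp
    ring
  calc c * c ^ (n-1) * (((c-1)*(c+1)) ^ (n-1) * (c⁻¹) ^ (n-1)
        * (((c-1)*(c+1)) * c⁻¹ + (n:ℝ) * -(c⁻¹ * ((n:ℝ) - 2))))
      = (((c-1)*(c+1)) ^ (n-1) * ((c⁻¹) ^ (n-1) * c ^ (n-1)))
        * (c * (((c-1)*(c+1)) * c⁻¹ + (n:ℝ) * -(c⁻¹ * ((n:ℝ) - 2)))) := by ring
    _ = ((c - 1) * (c + 1)) ^ (n - 1) * ((c - ((n:ℝ) - 1)) * (c + ((n:ℝ) - 1))) := by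
        rw [e3, e4, mul_one]


lemma degree_lemma (n : ℕ)
    [Fintype {p : Fin n × Fin n // (completeGraph (Fin n)).Adj p.1 p.2}]
    [DecidableRel (symLift (completeGraph (Fin n))).Adj]
    [∀ v, Fintype ((symLift (completeGraph (Fin n))).neighborSet v)]
    (v : {p : Fin n × Fin n // (completeGraph (Fin n)).Adj p.1 p.2}) :
    (symLift (completeGraph (Fin n))).degree v = 2 * (n - 2) := by
  classical
  obtain ⟨⟨u, w⟩, huw⟩ := v
  have huw' : u ≠ w := huw
  rw [← SimpleGraph.card_neighborSet_eq_degree]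
  have e1 : ((symLift (completeGraph (Fin n))).neighborSet ⟨(u, w), huw⟩)
      ≃ {p : Fin n × Fin n // (p.1 ≠ p.2) ∧ ((u, w) ≠ p ∧ (u = p.1 ∨ w = p.2))} := by
    refine (Equiv.subtypeEquivRight ?_).trans
      (Equiv.subtypeSubtypeEquivSubtypeInter (fun p : Fin n × Fin n => p.1 ≠ p.2)
        (fun p => (u, w) ≠ p ∧ (u = p.1 ∨ w = p.2)))
    intro b
    show (symLift (completeGraph (Fin n))).Adj ⟨(u, w), huw⟩ b ↔ _
    constructor
    · rintro ⟨hne, hor⟩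
      exact ⟨fun h => hne (Subtype.ext h.symm).symm, hor⟩
    · rintro ⟨hne, hor⟩
      exact ⟨fun h => hne (congrArg Subtype.val h), hor⟩
  rw [Fintype.card_congr e1, Fintype.card_subtype]
  have hset : (univ : Finset (Fin n × Fin n)).filter
        (fun p => (p.1 ≠ p.2) ∧ ((u, w) ≠ p ∧ (u = p.1 ∨ w = p.2)))
      = ((univ.filter (fun y : Fin n => y ≠ u ∧ y ≠ w)).image (fun y => (u, y)))
        ∪ ((univ.filter (fun x : Fin n => x ≠ u ∧ x ≠ w)).image (fun x => (x, w))) := by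
    ext ⟨x, y⟩
    simp only [Finset.mem_filter, Finset.mem_univ, true_and, Finset.mem_union,
      Finset.mem_image, Prod.mk.injEq, ne_eq, Prod.ext_iff, not_and]
    constructor
    · rintro ⟨hxy, hne, (h | h)⟩
      · subst h
        exact Or.inl ⟨y, ⟨fun hh => hxy hh.symm, fun hh => hne rfl hh.symm⟩, rfl, rfl⟩
      · subst h
        by_cases hx : u = x
        · exact absurd rfl (hne hx)
        · exact Or.inr ⟨x, ⟨fun hh => hx hh.symm, hxy⟩, rfl, rfl⟩
    · rintro (⟨y', ⟨h1, h2⟩, rfl, rfl⟩ | ⟨x', ⟨h1, h2⟩, rfl, rfl⟩)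
      · exact ⟨fun hh => h1 hh.symm, fun hh hh' => h2 hh'.symm, Or.inl rfl⟩
      · exact ⟨fun hh => h2 hh, fun hh hh' => h1 hh.symm, Or.inr rfl⟩
  rw [hset, Finset.card_union_of_disjoint, Finset.card_image_of_injective _
      (fun a b h => by simpa using h), Finset.card_image_of_injective _
      (fun a b h => by simpa using h), card_filter_ne huw']
  · omega
  · rw [Finset.disjoint_left]
    rintro ⟨x, y⟩ hx hy
    simp only [Finset.mem_image, Finset.mem_filter, Finset.mem_univ, true_and,
      Prod.mk.injEq] at hx hy
    obtain ⟨y', ⟨-, hy2⟩, rfl, rfl⟩ := hx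
    obtain ⟨x', -, -, h⟩ := hy
    exact hy2 h.symm



set_option maxHeartbeats 1000000 in
theorem key_charpoly (n : ℕ) (hn : 4 ≤ n)
    [Fintype {p : Fin n × Fin n // (completeGraph (Fin n)).Adj p.1 p.2}]
    [DecidableEq {p : Fin n × Fin n // (completeGraph (Fin n)).Adj p.1 p.2}]
    [DecidableRel (symLift (completeGraph (Fin n))).Adj] :
    ((symLift (completeGraph (Fin n))).adjMatrix ℝ).charpoly
      = (X - C (2 * ((n:ℝ) - 2))) * (X - C ((n:ℝ) - 2)) ^ (n - 1)
        * (X - C ((n:ℝ) - 4)) ^ (n - 1) * (X + C 2) ^ (n * (n - 3) + 1) := by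
  obtain ⟨m, rfl⟩ : ∃ m, n = m + 4 := ⟨n - 4, by omega⟩
  have hm1 : m + 4 - 1 = m + 3 := by omega
  have hm3 : m + 4 - 3 = m + 1 := by omega
  rw [hm1, hm3]
  apply Polynomial.eq_of_infinite_eval_eq
  have hfin : ({-2, ((m:ℝ) + 4) - 3, ((m:ℝ) + 4) - 2, ((m:ℝ) + 4) - 4} : Set ℝ).Finite := by
    apply Set.Finite.insert
    apply Set.Finite.insert
    apply Set.Finite.insert
    exact Set.finite_singleton _
  refine (hfin.infinite_compl).mono ?_
  intro x hx
  simp only [Set.mem_compl_iff, Set.mem_insert_iff, Set.mem_singleton_iff, not_or] at hx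
  obtain ⟨hx1, hx2, hx3, hx4⟩ := hx
  have hn' : ((m + 4 : ℕ) : ℝ) = (m : ℝ) + 4 := by push_cast; ring
  set y := x + 2 with hy
  have hy0 : y ≠ 0 := fun h => hx1 (by rw [hy] at h; linarith)
  set c := y - (((m + 4 : ℕ) : ℝ) - 1) with hcdef
  have hcx : c = x - ((m : ℝ) + 1) := by rw [hcdef, hy, hn']; ring
  have hc0 : c ≠ 0 := fun h => hx2 (by rw [hcx] at h; linarith)
  have hc1 : c - 1 ≠ 0 := fun h => hx3 (by rw [hcx] at h; linarith)
  have hc2 : c + 1 ≠ 0 := fun h => hx4 (by rw [hcx] at h; linarith)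
  have hα : c - c⁻¹ ≠ 0 := by
    have hh : c - c⁻¹ = (c - 1) * (c + 1) * c⁻¹ := by field_simp; ring
    rw [hh]
    exact mul_ne_zero (mul_ne_zero hc1 hc2) (inv_ne_zero hc0)
  show eval x _ = eval x _
  rw [eval_charpoly', smul_one_sub_adj (m + 4) x, ← hy]
  have hcard : Fintype.card {p : Fin (m+4) × Fin (m+4) //
      (completeGraph (Fin (m+4))).Adj p.1 p.2} = (m + 4) * (m + 3) := by
    rw [card_Vt (m+4), hm1]
  have hsyl := det_smul_one_sub_mul (F := ℝ) hy0 (Emat (m+4)) (Emat (m+4))ᵀ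
  rw [Fintype.card_sum, Fintype.card_fin, hcard] at hsyl
  have hsmall : (y • (1 : Matrix (Fin (m+4) ⊕ Fin (m+4)) (Fin (m+4) ⊕ Fin (m+4)) ℝ)
        - (Emat (m+4))ᵀ * Emat (m+4)).det
      = ((c - 1) * (c + 1)) ^ (m + 3)
        * ((c - (((m+4:ℕ):ℝ) - 1)) * (c + (((m+4:ℕ):ℝ) - 1))) := by
    rw [mul_EtE (m+4)]
    have hblk : y • (1 : Matrix (Fin (m+4) ⊕ Fin (m+4)) (Fin (m+4) ⊕ Fin (m+4)) ℝ)
        - Matrix.fromBlocks ((((m+4:ℕ):ℝ) - 1) • 1) (Jmat (m+4) - 1) (Jmat (m+4) - 1)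
            ((((m+4:ℕ):ℝ) - 1) • 1)
        = Matrix.fromBlocks (c • 1) (-(Jmat (m+4) - 1)) (-(Jmat (m+4) - 1)) (c • 1) := by
      ext i j
      rcases i with a | a <;> rcases j with b | b <;>
          simp only [Matrix.sub_apply, Matrix.smul_apply, Matrix.one_apply,
            Matrix.fromBlocks_apply₁₁, Matrix.fromBlocks_apply₁₂, Matrix.fromBlocks_apply₂₁,
            Matrix.fromBlocks_apply₂₂, Matrix.neg_apply, Sum.inl.injEq, Sum.inr.injEq,
            hcdef, reduceCtorEq]
      · by_cases hab : a = b <;> simp [hab]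
      · simp
      · simp
      · by_cases hab : a = b <;> simp [hab]
    rw [hblk, det_block (m+4) (by omega) c hc0 hα, hm1]
  apply mul_left_cancel₀ (pow_ne_zero ((m+4) + (m+4)) hy0)
  rw [hsyl, hsmall, mul_pow]
  simp only [eval_mul, eval_pow, eval_sub, eval_add, eval_X, eval_C]
  rw [hcx, hy, hn']
  ring

end Stmt16Aux

open scoped Classical in
/-- The symmetric lift of the complete graph `Kₙ` (for `n ≥ 4`) has `n(n-1)` vertices, is
regular of degree `2(n-2)`, and its adjacency spectrum is `2(n-2)` (once), `n-2` (`n-1` times),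
`n-4` (`n-1` times) and `-2` (`n(n-3)+1` times). -/
theorem stmt_16 (n : ℕ) (hn : 4 ≤ n) :
    Fintype.card {p : Fin n × Fin n // (completeGraph (Fin n)).Adj p.1 p.2} = n * (n - 1) ∧
    (symLift (completeGraph (Fin n))).IsRegularOfDegree (2 * (n - 2)) ∧
    ((symLift (completeGraph (Fin n))).adjMatrix ℝ).charpoly.roots =
      Multiset.replicate 1 (2 * ((n : ℝ) - 2)) +
      Multiset.replicate (n - 1) ((n : ℝ) - 2) +
      Multiset.replicate (n - 1) ((n : ℝ) - 4) +
      Multiset.replicate (n * (n - 3) + 1) (-2 : ℝ) := by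
  refine ⟨Stmt16Aux.card_Vt n, fun v => Stmt16Aux.degree_lemma n v, ?_⟩
  rw [Stmt16Aux.key_charpoly n hn]
  have hX2 : (X + C (2:ℝ)) = X - C (-2) := by rw [map_neg, sub_neg_eq_add]
  rw [hX2]
  have m1 : (X - C (2 * ((n:ℝ) - 2))).Monic := monic_X_sub_C _
  have m2 : ((X - C ((n:ℝ) - 2)) ^ (n - 1)).Monic := (monic_X_sub_C _).pow _
  have m3 : ((X - C ((n:ℝ) - 4)) ^ (n - 1)).Monic := (monic_X_sub_C _).pow _
  have m4 : ((X - C (-2:ℝ)) ^ (n * (n - 3) + 1)).Monic := (monic_X_sub_C _).pow _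
  rw [Polynomial.roots_mul (((m1.mul m2).mul m3).mul m4).ne_zero,
    Polynomial.roots_mul ((m1.mul m2).mul m3).ne_zero,
    Polynomial.roots_mul (m1.mul m2).ne_zero,
    Polynomial.roots_pow, Polynomial.roots_pow, Polynomial.roots_pow,
    Polynomial.roots_X_sub_C, Polynomial.roots_X_sub_C, Polynomial.roots_X_sub_C,
    Polynomial.roots_X_sub_C]
  simp only [Multiset.nsmul_singleton, Multiset.replicate_one]
end
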